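/- Let f : ℝ^p → ℝ be differentiable with L-Lipschitz gradient, and suppose |f(θ)| ≤ ℓ_max for all θ. Fix η with 0 < η < 1/L. Let (θ_t)_{t≥1} be generated by θ_{t+1} = θ_t − η g_t where g_t ∈ ℝ^p, set e_t = g_t − ∇f(θ_t), and assume ‖∇f(θ_t)‖ ≤ G for all 1 ≤ t ≤ T. Then T · min_{1 ≤ t ≤ T} ‖∇f(θ_t)‖² ≤ (f(θ_1) − f(θ_{T+1}) + ηG·Σ_{t=1}^T ‖e_t‖ + η²L·Σ_{t=1}^T ‖e_t‖²)/(η − Lη²), and in particular min_{1 ≤ t ≤ T} ‖∇f(θ_t)‖² ≤ (2ℓ_max + ηG·Σ_{t=1}^T ‖e_t‖ + η²L·Σ_{t=1}^T ‖e_t‖²)/(T(η − Lη²)). -/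

import Mathlib

open Real Finset

lemma telescope (u : ℕ → ℝ) (T : ℕ) :
    ∑ t ∈ Finset.Icc 1 T, (u t - u (t + 1)) = u 1 - u (T + 1) := by
  induction T with
  | zero => simp
  | succ n ih =>
      rw [Finset.sum_Icc_succ_top (Nat.le_add_left 1 n), ih]
      ring

lemma fderiv_eq_toDual_gradient {p : ℕ} (f : EuclideanSpace ℝ (Fin p) → ℝ) (x) :
    fderiv ℝ f x = InnerProductSpace.toDual ℝ _ (gradient f x) := by
  simp [gradient]

lemma descent_lemma {p : ℕ} (f : EuclideanSpace ℝ (Fin p) → ℝ) (L : ℝ) (hL : 0 ≤ L)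
    (hf : Differentiable ℝ f)
    (hLip : ∀ a b, ‖gradient f a - gradient f b‖ ≤ L * ‖a - b‖) (x y) :
    f y ≤ f x + inner ℝ (gradient f x) (y - x) + L * ‖y - x‖ ^ 2 := by
  have key : ‖f y - f x - (fderiv ℝ f x) (y - x)‖ ≤ (L * ‖y - x‖) * ‖y - x‖ := by
    refine Convex.norm_image_sub_le_of_norm_fderiv_le'
      (s := Metric.closedBall x ‖y - x‖) (fun z _ => hf.differentiableAt)
      (fun z hz => ?_) (convex_closedBall _ _)
      (Metric.mem_closedBall_self (norm_nonneg _)) ?_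
    · have : fderiv ℝ f z - fderiv ℝ f x
          = InnerProductSpace.toDual ℝ _ (gradient f z - gradient f x) := by
        rw [fderiv_eq_toDual_gradient, fderiv_eq_toDual_gradient, map_sub]
      rw [this, LinearIsometryEquiv.norm_map]
      calc ‖gradient f z - gradient f x‖ ≤ L * ‖z - x‖ := hLip z x
        _ ≤ L * ‖y - x‖ := by
            apply mul_le_mul_of_nonneg_left _ hL
            simpa [dist_eq_norm] using hz
    · exact Metric.mem_closedBall.mpr (by rw [dist_eq_norm])
  have h2 : f y - f x - inner ℝ (gradient f x) (y - x) ≤ L * ‖y - x‖ ^ 2 := by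
    have := (abs_le.mp (by rwa [Real.norm_eq_abs] at key)).2
    rw [fderiv_eq_toDual_gradient, InnerProductSpace.toDual_apply_apply] at this
    nlinarith [this]
  linarith

/-- Telescoped convergence bound for gradient descent with inexact gradients: if `f` has
`L`-Lipschitz gradient, `|f| ≤ ℓmax`, `0 < η < 1/L`, the iterates satisfy
`θ_{t+1} = θ_t − η g_t` with errors `e_t = g_t − ∇f(θ_t)` and `‖∇f(θ_t)‖ ≤ G` for
`1 ≤ t ≤ T`, then `T · min_{1≤t≤T} ‖∇f(θ_t)‖²` and `min_{1≤t≤T} ‖∇f(θ_t)‖²` obey the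
stated bounds. -/
theorem inexact_gradient_descent_convergence {p : ℕ}
    (f : EuclideanSpace ℝ (Fin p) → ℝ) (L ℓmax : ℝ) (hL : 0 < L)
    (hf : Differentiable ℝ f)
    (hLip : ∀ a b, ‖gradient f a - gradient f b‖ ≤ L * ‖a - b‖)
    (hbdd : ∀ θ, |f θ| ≤ ℓmax)
    (η : ℝ) (hη0 : 0 < η) (hη1 : η < 1 / L)
    (θ g : ℕ → EuclideanSpace ℝ (Fin p))
    (hstep : ∀ t, θ (t + 1) = θ t - η • g t)
    (T : ℕ) (hT : 1 ≤ T)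
    (G : ℝ) (hG : ∀ t, 1 ≤ t → t ≤ T → ‖gradient f (θ t)‖ ≤ G) :
    (T : ℝ) * ((Finset.Icc 1 T).inf' (Finset.nonempty_Icc.mpr hT)
        (fun t => ‖gradient f (θ t)‖ ^ 2)) ≤
      (f (θ 1) - f (θ (T + 1)) + η * G * ∑ t ∈ Finset.Icc 1 T, ‖g t - gradient f (θ t)‖
          + η ^ 2 * L * ∑ t ∈ Finset.Icc 1 T, ‖g t - gradient f (θ t)‖ ^ 2) /
        (η - L * η ^ 2) ∧
    ((Finset.Icc 1 T).inf' (Finset.nonempty_Icc.mpr hT)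
        (fun t => ‖gradient f (θ t)‖ ^ 2)) ≤
      (2 * ℓmax + η * G * ∑ t ∈ Finset.Icc 1 T, ‖g t - gradient f (θ t)‖
          + η ^ 2 * L * ∑ t ∈ Finset.Icc 1 T, ‖g t - gradient f (θ t)‖ ^ 2) /
        ((T : ℝ) * (η - L * η ^ 2)) := by
  have hLη : L * η < 1 := by
    rw [lt_div_iff₀ hL] at hη1; linarith [hη1]
  have hc : 0 < η - L * η ^ 2 := by nlinarith
  have hG0 : 0 ≤ G := (norm_nonneg _).trans (hG 1 le_rfl hT)
  -- per-step inequality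
  have step : ∀ t, 1 ≤ t → t ≤ T →
      (η - L * η ^ 2) * ‖gradient f (θ t)‖ ^ 2 ≤
        f (θ t) - f (θ (t + 1)) + η * G * ‖g t - gradient f (θ t)‖
          + η ^ 2 * L * ‖g t - gradient f (θ t)‖ ^ 2 := by
    intro t ht1 ht2
    set x := θ t
    set d := gradient f x with hd
    set e := g t - d with he
    have hgt : g t = d + e := by rw [he]; abel
    have hy : θ (t + 1) - x = -(η • g t) := by rw [hstep t]; abel
    have key := descent_lemma f L hL.le hf hLip x (θ (t + 1))
    rw [hy] at key
    have hin : (inner ℝ d (-(η • g t)) : ℝ) = -η * (‖d‖^2 + inner ℝ d e) := by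
      rw [inner_neg_right, real_inner_smul_right, hgt, inner_add_right,
        real_inner_self_eq_norm_sq]
      ring
    have hnrm : ‖-(η • g t)‖ ^ 2 = η^2 * (‖d‖^2 + 2 * inner ℝ d e + ‖e‖^2) := by
      rw [norm_neg, norm_smul, hgt, mul_pow]
      rw [@norm_add_sq_real]
      simp [abs_of_pos hη0]
    rw [hin, hnrm] at key
    have hde : |(inner ℝ d e : ℝ)| ≤ G * ‖e‖ := by
      calc |(inner ℝ d e : ℝ)| ≤ ‖d‖ * ‖e‖ := abs_real_inner_le_norm d e
        _ ≤ G * ‖e‖ := mul_le_mul_of_nonneg_right (hG t ht1 ht2) (norm_nonneg _)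
    have habs := abs_le.mp hde
    nlinarith [mul_nonneg (show (0:ℝ) ≤ 2*η - 2*L*η^2 by nlinarith)
        (show (0:ℝ) ≤ (inner ℝ d e : ℝ) + G * ‖e‖ by linarith [habs.1]),
      mul_nonneg (show (0:ℝ) ≤ 2*L*η^2 by positivity)
        (show (0:ℝ) ≤ G * ‖e‖ - (inner ℝ d e : ℝ) by linarith [habs.2])]
  -- sum over Icc 1 T
  set S1 := ∑ t ∈ Finset.Icc 1 T, ‖g t - gradient f (θ t)‖ with hS1
  set S2 := ∑ t ∈ Finset.Icc 1 T, ‖g t - gradient f (θ t)‖ ^ 2 with hS2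
  have hsum : (η - L * η ^ 2) * ∑ t ∈ Finset.Icc 1 T, ‖gradient f (θ t)‖ ^ 2 ≤
      f (θ 1) - f (θ (T + 1)) + η * G * S1 + η ^ 2 * L * S2 := by
    rw [Finset.mul_sum, hS1, hS2, Finset.mul_sum, Finset.mul_sum]
    have htel : ∑ t ∈ Finset.Icc 1 T, (f (θ t) - f (θ (t + 1)))
        = f (θ 1) - f (θ (T + 1)) := telescope (fun t => f (θ t)) T
    calc ∑ t ∈ Finset.Icc 1 T, (η - L * η ^ 2) * ‖gradient f (θ t)‖ ^ 2
        ≤ ∑ t ∈ Finset.Icc 1 T, (f (θ t) - f (θ (t + 1))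
            + η * G * ‖g t - gradient f (θ t)‖
            + η ^ 2 * L * ‖g t - gradient f (θ t)‖ ^ 2) := by
          apply Finset.sum_le_sum
          intro t ht
          rw [Finset.mem_Icc] at ht
          exact step t ht.1 ht.2
      _ = f (θ 1) - f (θ (T + 1)) + ∑ t ∈ Finset.Icc 1 T, η * G * ‖g t - gradient f (θ t)‖
            + ∑ t ∈ Finset.Icc 1 T, η ^ 2 * L * ‖g t - gradient f (θ t)‖ ^ 2 := by
          rw [Finset.sum_add_distrib, Finset.sum_add_distrib, htel]
  -- min bound
  set m := (Finset.Icc 1 T).inf' (Finset.nonempty_Icc.mpr hT)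
      (fun t => ‖gradient f (θ t)‖ ^ 2) with hm
  have hmin : (T : ℝ) * m ≤ ∑ t ∈ Finset.Icc 1 T, ‖gradient f (θ t)‖ ^ 2 := by
    have := Finset.card_nsmul_le_sum (Finset.Icc 1 T)
      (fun t => ‖gradient f (θ t)‖ ^ 2) m
      (fun t ht => Finset.inf'_le _ ht)
    rw [Nat.card_Icc] at this
    simpa [nsmul_eq_mul] using this
  have h1 : (T : ℝ) * m ≤
      (f (θ 1) - f (θ (T + 1)) + η * G * S1 + η ^ 2 * L * S2) / (η - L * η ^ 2) := by
    rw [le_div_iff₀ hc]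
    calc (T : ℝ) * m * (η - L * η ^ 2)
        = (η - L * η ^ 2) * ((T : ℝ) * m) := by ring
      _ ≤ (η - L * η ^ 2) * ∑ t ∈ Finset.Icc 1 T, ‖gradient f (θ t)‖ ^ 2 :=
          mul_le_mul_of_nonneg_left hmin hc.le
      _ ≤ _ := hsum
  constructor
  · exact h1
  · have hT0 : (0:ℝ) < T := by exact_mod_cast hT
    rw [le_div_iff₀ (by positivity)]
    have hfs : f (θ 1) - f (θ (T + 1)) ≤ 2 * ℓmax := by
      have h1 := abs_le.mp (hbdd (θ 1))
      have h2 := abs_le.mp (hbdd (θ (T + 1)))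
      linarith [h1.2, h2.1]
    calc m * ((T : ℝ) * (η - L * η ^ 2)) = (T : ℝ) * m * (η - L * η ^ 2) := by ring
      _ ≤ f (θ 1) - f (θ (T + 1)) + η * G * S1 + η ^ 2 * L * S2 := by
          rw [← le_div_iff₀ hc]; exact h1
      _ ≤ 2 * ℓmax + η * G * S1 + η ^ 2 * L * S2 := by linarith
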